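/- The singular kernel of the Riesz transform R_N^{(j)} = ∂_j(-Δ + N)^{-1/2} on ℝ^d (d ≥ 3, N > 0) is K_N^{(j)}(x,y) = -c_N ((x_j - y_j)/|x-y|) e^{-√N |x-y|} s(√N |x-y|), where s(a) := ∫₀^∞ e^{-at}(t + t²/2)^{(d-2)/2} dt + ∫₀^∞ t e^{-at}(t + t²/2)^{(d-2)/2} dt, and the function s satisfies the lower bound s(a) ≥ c a^{-d} for all a > 0 with a dimensional constant c > 0. -/

import Mathlib

open MeasureTheory Set

noncomputable section

/-- The profile function `s(a)` appearing in the Riesz-transform kernel of `-Δ + N`: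
`s(a) = ∫₀^∞ e^{-at}(t+t²/2)^{(d-2)/2} dt + ∫₀^∞ t e^{-at}(t+t²/2)^{(d-2)/2} dt`. -/
def sFun (d : ℕ) (a : ℝ) : ℝ :=
  (∫ t in Ioi (0:ℝ), Real.exp (-(a * t)) * (t + t ^ 2 / 2) ^ (((d : ℝ) - 2) / 2)) +
  ∫ t in Ioi (0:ℝ), t * Real.exp (-(a * t)) * (t + t ^ 2 / 2) ^ (((d : ℝ) - 2) / 2)

/-- Lower bound `s(a) ≥ c a^{-d}` with a dimensional constant `c > 0`. -/
theorem stmt14 (d : ℕ) (hd : 3 ≤ d) :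
    ∃ c : ℝ, 0 < c ∧ ∀ a : ℝ, 0 < a → c * a ^ (-(d : ℝ)) ≤ sFun d a := by
  set p : ℝ := ((d : ℝ) - 2) / 2 with hp
  have hd3 : (3 : ℝ) ≤ (d : ℝ) := by exact_mod_cast hd
  have hp0 : 0 < p := by rw [hp]; linarith
  have hΓ : 0 < Real.Gamma (d : ℝ) := Real.Gamma_pos_of_pos (by linarith)
  refine ⟨(2 : ℝ) ^ (-p) * Real.Gamma (d : ℝ), by positivity, fun a ha => ?_⟩
  -- first integrand nonneg
  have h1 : 0 ≤ ∫ t in Ioi (0:ℝ), Real.exp (-(a * t)) * (t + t ^ 2 / 2) ^ p := by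
    refine setIntegral_nonneg measurableSet_Ioi fun t ht => ?_
    have ht0 : 0 < t := ht
    have : (0:ℝ) ≤ t + t ^ 2 / 2 := by positivity
    positivity
  -- the dominating function and integrability of the second integrand
  have hf2meas : AEStronglyMeasurable
      (fun t : ℝ => t * Real.exp (-(a * t)) * (t + t ^ 2 / 2) ^ p)
      (volume.restrict (Ioi (0:ℝ))) := by
    have hc : Continuous (fun t : ℝ => t * Real.exp (-(a * t)) * (t + t ^ 2 / 2) ^ p) :=
      (continuous_id.mul (Real.continuous_exp.comp
        ((continuous_const.mul continuous_id).neg))).mul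
        ((continuous_id.add ((continuous_pow 2).div_const 2)).rpow_const
          (fun _ => Or.inr hp0.le))
    exact hc.aestronglyMeasurable
  have hDint : IntegrableOn
      (fun t : ℝ => (2:ℝ) ^ ((d:ℝ) - 1) * (Real.exp (-(a * t)) +
        t ^ ((d:ℝ) - 1) * Real.exp (-(a * t)))) (Ioi (0:ℝ)) := by
    refine (Integrable.add ?_ ?_).const_mul _
    · simpa [neg_mul] using (exp_neg_integrableOn_Ioi (0:ℝ) ha).integrable
    · have := integrableOn_rpow_mul_exp_neg_mul_rpow (p := 1) (s := (d:ℝ) - 1)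
        (by linarith) one_pos ha
      simpa [Real.rpow_one, neg_mul] using this.integrable
  have hf2int : IntegrableOn
      (fun t : ℝ => t * Real.exp (-(a * t)) * (t + t ^ 2 / 2) ^ p) (Ioi (0:ℝ)) := by
    refine Integrable.mono' hDint hf2meas ?_
    rw [ae_restrict_iff' measurableSet_Ioi]
    filter_upwards with t ht
    have ht0 : 0 < t := ht
    have hbase : (0:ℝ) ≤ t + t ^ 2 / 2 := by positivity
    have h2p : 2 * p = (d:ℝ) - 2 := by rw [hp]; ring
    have key : (t + t ^ 2 / 2) ^ p ≤ (1 + t) ^ ((d:ℝ) - 2) := by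
      have h1 : t + t ^ 2 / 2 ≤ (1 + t) ^ 2 := by nlinarith
      calc (t + t ^ 2 / 2) ^ p ≤ ((1 + t) ^ 2) ^ p :=
            Real.rpow_le_rpow hbase h1 hp0.le
        _ = (1 + t) ^ ((d:ℝ) - 2) := by
            rw [← Real.rpow_natCast (1 + t) 2, ← Real.rpow_mul (by linarith)]
            norm_num [h2p]
    have step1 : t * Real.exp (-(a * t)) * (t + t ^ 2 / 2) ^ p
        ≤ (1 + t) ^ ((d:ℝ) - 1) * Real.exp (-(a * t)) := by
      have h1t : (0:ℝ) < 1 + t := by linarith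
      have : t * (t + t ^ 2 / 2) ^ p ≤ (1 + t) ^ ((d:ℝ) - 1) := by
        calc t * (t + t ^ 2 / 2) ^ p ≤ (1 + t) * (1 + t) ^ ((d:ℝ) - 2) := by
              refine mul_le_mul (by linarith) key (Real.rpow_nonneg hbase _) (by linarith)
          _ = (1 + t) ^ ((d:ℝ) - 1) := by
              rw [show (d:ℝ) - 1 = 1 + ((d:ℝ) - 2) by ring,
                Real.rpow_add h1t, Real.rpow_one]
      calc t * Real.exp (-(a * t)) * (t + t ^ 2 / 2) ^ p
          = t * (t + t ^ 2 / 2) ^ p * Real.exp (-(a * t)) := by ring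
        _ ≤ (1 + t) ^ ((d:ℝ) - 1) * Real.exp (-(a * t)) := by
            exact mul_le_mul_of_nonneg_right this (Real.exp_pos _).le
    have step2 : (1 + t) ^ ((d:ℝ) - 1)
        ≤ (2:ℝ) ^ ((d:ℝ) - 1) * (1 + t ^ ((d:ℝ) - 1)) := by
      rcases le_total t 1 with h | h
      · have : (1 + t) ^ ((d:ℝ) - 1) ≤ (2:ℝ) ^ ((d:ℝ) - 1) :=
          Real.rpow_le_rpow (by linarith) (by linarith) (by linarith)
        nlinarith [Real.rpow_nonneg ht0.le ((d:ℝ) - 1),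
          Real.rpow_nonneg (by norm_num : (0:ℝ) ≤ 2) ((d:ℝ) - 1)]
      · have : (1 + t) ^ ((d:ℝ) - 1) ≤ (2 * t) ^ ((d:ℝ) - 1) :=
          Real.rpow_le_rpow (by linarith) (by linarith) (by linarith)
        rw [Real.mul_rpow (by norm_num) ht0.le] at this
        nlinarith [Real.rpow_nonneg (by norm_num : (0:ℝ) ≤ 2) ((d:ℝ) - 1)]
    have habs : |t * Real.exp (-(a * t)) * (t + t ^ 2 / 2) ^ p|
        = t * Real.exp (-(a * t)) * (t + t ^ 2 / 2) ^ p := by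
      rw [abs_of_nonneg]; positivity
    rw [Real.norm_eq_abs, habs]
    calc t * Real.exp (-(a * t)) * (t + t ^ 2 / 2) ^ p
        ≤ (1 + t) ^ ((d:ℝ) - 1) * Real.exp (-(a * t)) := step1
      _ ≤ ((2:ℝ) ^ ((d:ℝ) - 1) * (1 + t ^ ((d:ℝ) - 1))) * Real.exp (-(a * t)) :=
          mul_le_mul_of_nonneg_right step2 (Real.exp_pos _).le
      _ = (2:ℝ) ^ ((d:ℝ) - 1) * (Real.exp (-(a * t)) +
            t ^ ((d:ℝ) - 1) * Real.exp (-(a * t))) := by ring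
  -- lower bound function g
  have hgint : IntegrableOn
      (fun t : ℝ => t ^ ((d:ℝ) - 1) * Real.exp (-(a * t)) * (2:ℝ) ^ (-p)) (Ioi (0:ℝ)) := by
    refine Integrable.mul_const ?_ _
    have := integrableOn_rpow_mul_exp_neg_mul_rpow (p := 1) (s := (d:ℝ) - 1)
      (by linarith) one_pos ha
    simpa [Real.rpow_one, neg_mul] using this.integrable
  have hmono : ∀ t ∈ Ioi (0:ℝ),
      t ^ ((d:ℝ) - 1) * Real.exp (-(a * t)) * (2:ℝ) ^ (-p)
        ≤ t * Real.exp (-(a * t)) * (t + t ^ 2 / 2) ^ p := by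
    intro t ht
    have ht0 : 0 < t := ht
    have h2p : 2 * p = (d:ℝ) - 2 := by rw [hp]; ring
    have hkey : t ^ ((d:ℝ) - 1) * (2:ℝ) ^ (-p) = t * (t ^ 2 / 2) ^ p := by
      rw [Real.div_rpow (by positivity) (by norm_num),
        ← Real.rpow_natCast t 2, ← Real.rpow_mul ht0.le, Real.rpow_neg (by norm_num)]
      push_cast
      rw [h2p, show (d:ℝ) - 1 = 1 + ((d:ℝ) - 2) by ring,
        Real.rpow_add ht0, Real.rpow_one]
      ring
    have hle : (t ^ 2 / 2) ^ p ≤ (t + t ^ 2 / 2) ^ p :=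
      Real.rpow_le_rpow (by positivity) (by linarith) hp0.le
    calc t ^ ((d:ℝ) - 1) * Real.exp (-(a * t)) * (2:ℝ) ^ (-p)
        = t * (t ^ 2 / 2) ^ p * Real.exp (-(a * t)) := by
          rw [show t ^ ((d:ℝ) - 1) * Real.exp (-(a * t)) * (2:ℝ) ^ (-p)
            = t ^ ((d:ℝ) - 1) * (2:ℝ) ^ (-p) * Real.exp (-(a * t)) by ring, hkey]
      _ ≤ t * (t + t ^ 2 / 2) ^ p * Real.exp (-(a * t)) := by
          refine mul_le_mul_of_nonneg_right ?_ (Real.exp_pos _).le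
          exact mul_le_mul_of_nonneg_left hle ht0.le
      _ = t * Real.exp (-(a * t)) * (t + t ^ 2 / 2) ^ p := by ring
  have hcomp : ∫ t in Ioi (0:ℝ), t ^ ((d:ℝ) - 1) * Real.exp (-(a * t)) * (2:ℝ) ^ (-p)
      = (2:ℝ) ^ (-p) * Real.Gamma (d : ℝ) * a ^ (-(d:ℝ)) := by
    rw [integral_mul_const]
    have := Real.integral_rpow_mul_exp_neg_mul_Ioi (a := (d:ℝ)) (r := a)
      (by linarith) ha
    rw [this, one_div, ← Real.rpow_neg_one, ← Real.rpow_mul ha.le, neg_one_mul]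
    ring
  have h2 : (2:ℝ) ^ (-p) * Real.Gamma (d : ℝ) * a ^ (-(d:ℝ))
      ≤ ∫ t in Ioi (0:ℝ), t * Real.exp (-(a * t)) * (t + t ^ 2 / 2) ^ p := by
    rw [← hcomp]
    exact setIntegral_mono_on hgint hf2int measurableSet_Ioi hmono
  unfold sFun
  rw [mul_assoc] at h2 ⊢
  linarith
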